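/- Let A be a real n×n matrix, let Q and R be symmetric positive definite real n×n matrices, and suppose P is a symmetric positive definite real n×n matrix solving the algebraic Riccati equation A·P + P·Aᵀ + Q − P·R⁻¹·P = 0. Set F = P·R⁻¹. Then for every complex number s with Re(s) ≥ 1/2, the complex matrix A − s·F is Hurwitz (all of its eigenvalues have strictly negative real part). -/

import Mathlib

open Matrix

/-- A complex square matrix is Hurwitz if every one of its eigenvalues has
strictly negative real part. -/
def IsHurwitzC {m : Type*} [Fintype m] [DecidableEq m] (M : Matrix m m ℂ) : Prop :=
  ∀ z ∈ spectrum ℂ M, z.re < 0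

lemma re_quad_map {n : ℕ} (P : Matrix (Fin n) (Fin n) ℝ) (x : Fin n → ℂ) :
    (star x ⬝ᵥ (P.map Complex.ofReal) *ᵥ x).re
      = (fun i => (x i).re) ⬝ᵥ P *ᵥ (fun i => (x i).re)
        + (fun i => (x i).im) ⬝ᵥ P *ᵥ (fun i => (x i).im) := by
  simp only [dotProduct, mulVec, Matrix.map_apply, Pi.star_apply]
  rw [← Finset.sum_add_distrib, Complex.re_sum]
  refine Finset.sum_congr rfl fun i _ => ?_
  rw [Finset.mul_sum, Complex.re_sum, Finset.mul_sum, Finset.mul_sum, ← Finset.sum_add_distrib]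
  refine Finset.sum_congr rfl fun j _ => ?_
  simp [Complex.mul_re, Complex.mul_im]

lemma re_quad_pos {n : ℕ} {P : Matrix (Fin n) (Fin n) ℝ} (hP : P.PosDef)
    {x : Fin n → ℂ} (hx : x ≠ 0) :
    0 < (star x ⬝ᵥ (P.map Complex.ofReal) *ᵥ x).re := by
  rw [re_quad_map]
  set a : Fin n → ℝ := fun i => (x i).re with ha
  set b : Fin n → ℝ := fun i => (x i).im with hb
  have hab : a ≠ 0 ∨ b ≠ 0 := by
    by_contra h
    push_neg at h
    apply hx
    funext i
    have h1 := congrFun h.1 i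
    have h2 := congrFun h.2 i
    simp only [ha, hb, Pi.zero_apply] at h1 h2
    exact Complex.ext h1 h2
  have hsa : ∀ v : Fin n → ℝ, star v = v := fun v => funext fun i => star_trivial _
  rcases hab with h | h
  · have h1 := hP.dotProduct_mulVec_pos h
    have h2 := hP.posSemidef.dotProduct_mulVec_nonneg b
    rw [hsa a] at h1
    rw [hsa b] at h2
    linarith
  · have h1 := hP.dotProduct_mulVec_pos h
    have h2 := hP.posSemidef.dotProduct_mulVec_nonneg a
    rw [hsa b] at h1
    rw [hsa a] at h2
    linarith

lemma re_quad_nonneg {n : ℕ} {P : Matrix (Fin n) (Fin n) ℝ} (hP : P.PosSemidef)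
    (x : Fin n → ℂ) :
    0 ≤ (star x ⬝ᵥ (P.map Complex.ofReal) *ᵥ x).re := by
  rw [re_quad_map]
  have h1 := hP.dotProduct_mulVec_nonneg (fun i => (x i).re)
  have h2 := hP.dotProduct_mulVec_nonneg (fun i => (x i).im)
  have hsa : ∀ v : Fin n → ℝ, star v = v := fun v => funext fun i => star_trivial _
  rw [hsa] at h1 h2
  linarith


/-- key technical content of the paper's Lemma 3: if `P` is a
symmetric positive definite solution of the algebraic Riccati equation
`A * P + P * Aᵀ + Q - P * R⁻¹ * P = 0` with `Q, R` symmetric positive definite,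
and `F = P * R⁻¹`, then for every complex `s` with `Re s ≥ 1/2` the matrix
`A - s • F` is Hurwitz. -/
theorem riccati_gain_hurwitz {n : ℕ} (A Q R P : Matrix (Fin n) (Fin n) ℝ)
    (hQ : Q.PosDef) (hR : R.PosDef) (hP : P.PosDef)
    (hRic : A * P + P * Aᵀ + Q - P * R⁻¹ * P = 0) :
    ∀ s : ℂ, (1 : ℝ) / 2 ≤ s.re →
      IsHurwitzC (A.map Complex.ofReal - s • ((P * R⁻¹).map Complex.ofReal)) := by
  intro s hs z hz
  set M : Matrix (Fin n) (Fin n) ℂ :=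
    A.map Complex.ofReal - s • ((P * R⁻¹).map Complex.ofReal) with hMdef
  have hdet : (z • (1 : Matrix (Fin n) (Fin n) ℂ) - M).det = 0 := by
    have hz' : ¬ IsUnit (algebraMap ℂ (Matrix (Fin n) (Fin n) ℂ) z - M) := spectrum.mem_iff.mp hz
    rw [Matrix.isUnit_iff_isUnit_det, isUnit_iff_ne_zero, ne_eq, not_not] at hz'
    convert hz' using 2
    exact congrArg (· - M) (Algebra.algebraMap_eq_smul_one z).symm
  have hdet' : ((starRingEnd ℂ z) • (1 : Matrix (Fin n) (Fin n) ℂ) - Mᴴ).det = 0 := by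
    have h0 : ((z • (1 : Matrix (Fin n) (Fin n) ℂ) - M)ᴴ).det = 0 := by
      rw [det_conjTranspose, hdet, star_zero]
    rwa [conjTranspose_sub, conjTranspose_smul, conjTranspose_one] at h0
  obtain ⟨w, hw0, hw⟩ := Matrix.exists_mulVec_eq_zero_iff.mpr hdet'
  have hweig : Mᴴ *ᵥ w = (starRingEnd ℂ z) • w := by
    rw [sub_mulVec, smul_mulVec, one_mulVec, sub_eq_zero] at hw
    exact hw.symm
  -- notation
  have hmapmul : ∀ X Y : Matrix (Fin n) (Fin n) ℝ,
      (X * Y).map Complex.ofReal = X.map Complex.ofReal * Y.map Complex.ofReal :=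
    fun X Y => Matrix.map_mul (f := Complex.ofRealHom)
  have hct : ∀ X : Matrix (Fin n) (Fin n) ℝ,
      (X.map Complex.ofReal)ᴴ = (Xᵀ).map Complex.ofReal := by
    intro X; ext i j; simp [conjTranspose_apply, Complex.conj_ofReal]
  have hPt : Pᵀ = P := hP.1
  have hRinvt : (R⁻¹)ᵀ = R⁻¹ := by
    rw [Matrix.transpose_nonsing_inv, show Rᵀ = R from hR.1]
  have hMH : Mᴴ = (Aᵀ).map Complex.ofReal
      - (starRingEnd ℂ s) • ((R⁻¹ * P).map Complex.ofReal) := by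
    rw [hMdef, conjTranspose_sub, conjTranspose_smul, hct, hct, transpose_mul, hRinvt, hPt, Complex.star_def]
  -- the Lyapunov-type matrix identity
  have hreal : A * P + P * Aᵀ = P * R⁻¹ * P - Q := by
    have h := sub_eq_zero.mp hRic
    rw [← h]; abel
  have h3 : M * (P.map Complex.ofReal) + (P.map Complex.ofReal) * Mᴴ
      = (P * R⁻¹ * P - Q).map Complex.ofReal
        - (s + starRingEnd ℂ s) • ((P * R⁻¹ * P).map Complex.ofReal) := by
    rw [hMdef, hMH, sub_mul, mul_sub, smul_mul_assoc, mul_smul_comm,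
      ← hmapmul, ← hmapmul, ← hmapmul, ← hmapmul, ← mul_assoc P R⁻¹ P, ← hreal,
      Matrix.map_add _ Complex.ofReal_add, add_smul]
    abel
  -- scalar versions
  set q : Matrix (Fin n) (Fin n) ℂ → ℂ := fun N => star w ⬝ᵥ N *ᵥ w with hqdef
  have h1 : q (M * P.map Complex.ofReal) = z * q (P.map Complex.ofReal) := by
    have hvM : star w ᵥ* M = z • star w := by
      have := (star_mulVec Mᴴ w).symm
      rw [conjTranspose_conjTranspose] at this
      rw [this, hweig, star_smul]
      simp
    rw [hqdef]
    simp only [← mulVec_mulVec, dotProduct_mulVec (star w) M, hvM, smul_dotProduct,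
      ← dotProduct_mulVec]
    simp [smul_eq_mul]
  have h2 : q (P.map Complex.ofReal * Mᴴ) = (starRingEnd ℂ z) * q (P.map Complex.ofReal) := by
    rw [hqdef]
    simp only [← mulVec_mulVec, hweig, mulVec_smul, dotProduct_smul]
    simp [smul_eq_mul]
  have hqadd : ∀ X Y, q (X + Y) = q X + q Y := by
    intro X Y; rw [hqdef]; simp [add_mulVec, dotProduct_add]
  have hqsub : ∀ X Y, q (X - Y) = q X - q Y := by
    intro X Y; rw [hqdef]; simp [sub_mulVec, dotProduct_sub]
  have hqsmul : ∀ (c : ℂ) X, q (c • X) = c * q X := by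
    intro c X; rw [hqdef]; simp [smul_mulVec, smul_dotProduct, smul_eq_mul]
  -- combine
  have hcomb : (z + starRingEnd ℂ z) * q (P.map Complex.ofReal)
      = q ((P * R⁻¹ * P).map Complex.ofReal) - q (Q.map Complex.ofReal)
        - (s + starRingEnd ℂ s) * q ((P * R⁻¹ * P).map Complex.ofReal) := by
    have := hqadd _ _ ▸ congrArg q h3
    rw [h1, h2] at this
    rw [add_mul, this, hqsub, hqsmul, Matrix.map_sub _ Complex.ofReal_sub, hqsub]
  -- positivity facts
  have hqP : 0 < (q (P.map Complex.ofReal)).re := re_quad_pos hP hw0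
  have hqQ : 0 < (q (Q.map Complex.ofReal)).re := re_quad_pos hQ hw0
  have hS : (P * R⁻¹ * P).PosSemidef := by
    have := hR.inv.posSemidef.conjTranspose_mul_mul_same P
    rwa [show Pᴴ = P from hP.1] at this
  have hqS : 0 ≤ (q ((P * R⁻¹ * P).map Complex.ofReal)).re := re_quad_nonneg hS w
  -- take real parts
  have hre := congrArg Complex.re hcomb
  rw [Complex.add_conj, Complex.add_conj, Complex.re_ofReal_mul] at hre
  rw [Complex.sub_re, Complex.sub_re, Complex.re_ofReal_mul] at hre
  nlinarith [hqP, hqQ, hqS, hs, hre]
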